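/- Let W be a BMS channel, let λ and N₁ be positive integers, and let R ∈ [0,1] satisfy R·N₁·2^λ ∈ ℤ. Let A = {x ∈ [max(0,2R−1), min(1,2R)] : x·N₁·2^{λ−1} ∈ ℤ}. Then E_λ(W,R,N₁) = max_{R₁∈A} [ −ln( exp(−N₁·2^{λ−1}·E_{λ−1}(W⁻,R₁,N₁)) + exp(−N₁·2^{λ−1}·E_{λ−1}(W⁺,2R−R₁,N₁)) ) ] / (N₁·2^λ), where for λ = 1 the quantities on the right are E₀(·,·,N₁) = E(·,·,N₁). -/

import Mathlib

open scoped BigOperators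

/-- A binary-input discrete channel: a finite output alphabet `Y` and a kernel
`W x y` = probability of output `y` given input `x`. -/
structure PreChannel where
  Y : Type
  [fin : Fintype Y]
  W : Bool → Y → ℝ

attribute [instance] PreChannel.fin

namespace PreChannel

/-- `W` is a valid binary memoryless symmetric (BMS) channel. -/
def IsBMS (W : PreChannel) : Prop :=
  (∀ x y, 0 ≤ W.W x y) ∧ (∀ x, ∑ y, W.W x y = 1) ∧
    ∃ π : W.Y → W.Y, Function.Involutive π ∧ ∀ y, W.W false (π y) = W.W true y

/-- The polar "minus" transform `W⁻`. -/
noncomputable def minus (W : PreChannel) : PreChannel where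
  Y := W.Y × W.Y
  fin := inferInstance
  W := fun u₁ p => ∑ u₂ : Bool, (1 / 2) * W.W (Bool.xor u₁ u₂) p.1 * W.W u₂ p.2

/-- The polar "plus" transform `W⁺`; output is `(y₁, y₂, u₁)`. -/
noncomputable def plus (W : PreChannel) : PreChannel where
  Y := W.Y × W.Y × Bool
  fin := inferInstance
  W := fun u₂ p => (1 / 2) * W.W (Bool.xor p.2.2 u₂) p.1 * W.W u₂ p.2.1

/-- Capacity `I(W)` (in bits). -/
noncomputable def cap (W : PreChannel) : ℝ :=
  ∑ x : Bool, ∑ y, (1 / 2) * W.W x y *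
    Real.logb 2 (W.W x y / ((1 / 2) * W.W false y + (1 / 2) * W.W true y))

/-- Dispersion `V(W)`. -/
noncomputable def disp (W : PreChannel) : ℝ :=
  (∑ x : Bool, ∑ y, (1 / 2) * W.W x y *
      (Real.logb 2 (W.W x y / ((1 / 2) * W.W false y + (1 / 2) * W.W true y))) ^ 2)
    - cap W ^ 2

/-- Gallager's function `E₀(W, ρ)` (natural logarithm). -/
noncomputable def E0 (W : PreChannel) (ρ : ℝ) : ℝ :=
  - Real.log
      (∑ y, ((1 / 2) * (W.W false y ^ (1 / (1 + ρ)) + W.W true y ^ (1 / (1 + ρ)))) ^ (1 + ρ))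

/-- Bhattacharyya parameter `Z(W)`. -/
noncomputable def Zb (W : PreChannel) : ℝ := ∑ y, Real.sqrt (W.W false y * W.W true y)

/-- `E_x(W, ρ) = −ρ ln[(1 + Z(W)^{1/ρ})/2]`. -/
noncomputable def Ex (W : PreChannel) (ρ : ℝ) : ℝ :=
  - ρ * Real.log ((1 + Zb W ^ (1 / ρ)) / 2)

/-- Random-coding exponent `E_r(W, R)` as an extended real:
`max_{0 ≤ ρ ≤ 1} [E₀(W,ρ) − ρ R ln 2]` for `0 < R ≤ 1`, `+∞` at `R = 0`, `0` for `R > 1`. -/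
noncomputable def Er (W : PreChannel) (R : ℝ) : EReal :=
  if R = 0 then ⊤
  else if 1 < R then 0
  else ((sSup {x : ℝ | ∃ ρ ∈ Set.Icc (0 : ℝ) 1, x = E0 W ρ - ρ * R * Real.log 2} : ℝ) : EReal)

/-- Expurgated exponent `E_ex(W, R) = sup_{ρ ≥ 1} [E_x(W,ρ) − ρ R ln 2]`. -/
noncomputable def Eex (W : PreChannel) (R : ℝ) : EReal :=
  ⨆ ρ : {ρ : ℝ // 1 ≤ ρ}, ((Ex W ρ.1 - ρ.1 * R * Real.log 2 : ℝ) : EReal)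

/-- `E(W, R) = max [E_r(W,R), E_ex(W,R)]` for `R ≤ 1`, and `0` for `R > 1`. -/
noncomputable def Echan (W : PreChannel) (R : ℝ) : EReal :=
  if 1 < R then 0 else max (Er W R) (Eex W R)

/-- `E(W, R, N₁) = max [E_r(W,R), E_ex(W, R + 2/N₁)]`. -/
noncomputable def EchanN (W : PreChannel) (R : ℝ) (N₁ : ℕ) : EReal :=
  max (Er W R) (Eex W (R + 2 / (N₁ : ℝ)))

/-- Sub-channel `Wᵢ` after `lam` polarization steps: the most significant bit of `i`
is applied first, bit `1` = plus, bit `0` = minus. -/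
noncomputable def subch : PreChannel → (lam : ℕ) → ℕ → PreChannel
  | W, 0, _ => W
  | W, l + 1, i => subch (if i / 2 ^ l % 2 = 1 then W.plus else W.minus) l (i % 2 ^ l)

/-- `W^s` for a sign sequence `s` (`true` = plus, `false` = minus), applied in order. -/
noncomputable def polarSeq : PreChannel → List Bool → PreChannel
  | W, [] => W
  | W, b :: rest => polarSeq (if b then W.plus else W.minus) rest

/-- `exp(−t·E)` for `E ∈ [0, +∞]`, with the convention `exp(−∞) = 0`. -/
noncomputable def dexp (t : ℝ) (E : EReal) : ℝ :=
  if E = ⊤ then 0 else Real.exp (-t * E.toReal)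

/-- `−ln s` with the convention `−ln 0 = +∞`. -/
noncomputable def nlog (s : ℝ) : EReal :=
  if s ≤ 0 then ⊤ else ((-Real.log s : ℝ) : EReal)

/-- The finite-blocklength exponent `E_λ(W, R, N₁)`:
`(1/(N₁ 2^λ)) · max over admissible rate tuples of −ln Σᵢ exp(−N₁ E(Wᵢ, Rᵢ, N₁))`. -/
noncomputable def ElamN (W : PreChannel) (lam N₁ : ℕ) (R : ℝ) : EReal :=
  ((1 / ((N₁ : ℝ) * 2 ^ lam) : ℝ) : EReal) *
    sSup {v : EReal | ∃ Rv : Fin (2 ^ lam) → ℝ,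
      (∀ i, Rv i ∈ Set.Icc (0 : ℝ) 1 ∧ ∃ k : ℤ, Rv i * (N₁ : ℝ) = (k : ℝ)) ∧
      (∑ i, Rv i) = 2 ^ lam * R ∧
      v = nlog (∑ i : Fin (2 ^ lam), dexp (N₁ : ℝ) (EchanN (subch W lam (i : ℕ)) (Rv i) N₁))}

/-- The asymptotic exponent `E_λ(W, R)`, defined recursively;
`E_λ(W,R) = 0` for `R > 1` by convention. -/
noncomputable def ElamInf : PreChannel → ℕ → ℝ → EReal
  | W, 0, R => Echan W R
  | W, l + 1, R =>
      if 1 < R then 0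
      else ((1 / 2 : ℝ) : EReal) *
        sSup {v : EReal | ∃ R₁ ∈ Set.Icc (max 0 (2 * R - 1)) (min 1 (2 * R)),
          v = min (ElamInf W.minus l R₁) (ElamInf W.plus l (2 * R - R₁))}

/-- `V_λ(W) = (Σᵢ √V(Wᵢ))² / 2^λ`. -/
noncomputable def Vlam (W : PreChannel) (lam : ℕ) : ℝ :=
  (∑ i ∈ Finset.range (2 ^ lam), Real.sqrt (disp (subch W lam i))) ^ 2 / 2 ^ lam

end PreChannel

/-- Binary entropy function (base 2), with `h2 0 = h2 1 = 0`. -/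
noncomputable def h2 (x : ℝ) : ℝ := -x * Real.logb 2 x - (1 - x) * Real.logb 2 (1 - x)

/-- Inverse of the binary entropy function, with values in `[0, 1/2]`. -/
noncomputable def h2inv (v : ℝ) : ℝ := Function.invFunOn h2 (Set.Icc 0 (1 / 2)) v

/-- `ε_h(x) = x − x²`. -/
noncomputable def epsh (x : ℝ) : ℝ := x - x ^ 2

/-- `ε_l(x) = x − 1 + h₂(h₂⁻¹(1−x)·[2 − 2 h₂⁻¹(1−x)])`. -/
noncomputable def epsl (x : ℝ) : ℝ :=
  x - 1 + h2 (h2inv (1 - x) * (2 - 2 * h2inv (1 - x)))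

/-- The binary symmetric channel with crossover probability `p`. -/
noncomputable def BSC (p : ℝ) : PreChannel where
  Y := Bool
  fin := inferInstance
  W := fun x y => if y = x then 1 - p else p

/-- The binary erasure channel with erasure probability `δ` (`none` = erasure). -/
noncomputable def BEC (δ : ℝ) : PreChannel where
  Y := Option Bool
  fin := inferInstance
  W := fun x y => match y with
    | none => δ
    | some b => if b = x then 1 - δ else 0

/-- The channel-independent lower bound `Ê_λ(I, R)`. -/
noncomputable def Ehat : ℕ → ℝ → ℝ → EReal
  | 0, I, R => PreChannel.Echan (BSC (h2inv (1 - I))) R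
  | l + 1, I, R =>
      ((1 / 2 : ℝ) : EReal) *
        sInf {w : EReal | ∃ ε ∈ Set.Icc (epsl I) (epsh I),
          w = sSup {v : EReal | ∃ R₁ ∈ Set.Icc (max 0 (2 * R - 1)) (min 1 (2 * R)),
            v = min (Ehat l (I - ε) R₁) (Ehat l (I + ε) (2 * R - R₁))}}

/-- The Gaussian Q-function. -/
noncomputable def gaussQ (u : ℝ) : ℝ :=
  ∫ t in Set.Ioi u, (Real.sqrt (2 * Real.pi))⁻¹ * Real.exp (-t ^ 2 / 2)

open PreChannel

namespace Stmt0Aux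
open PreChannel Finset

noncomputable def sval (V : PreChannel) (l N₁ : ℕ) (Rv : Fin (2 ^ l) → ℝ) : ℝ :=
  ∑ i : Fin (2 ^ l), dexp (N₁ : ℝ) (EchanN (subch V l (i : ℕ)) (Rv i) N₁)

def Tup (n N₁ : ℕ) (σ : ℝ) : Set (Fin n → ℝ) :=
  {Rv | (∀ i, Rv i ∈ Set.Icc (0 : ℝ) 1 ∧ ∃ k : ℤ, Rv i * (N₁ : ℝ) = (k : ℝ)) ∧
    (∑ i, Rv i) = σ}

noncomputable def Aset (V : PreChannel) (l N₁ : ℕ) (ρ : ℝ) : Set ℝ :=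
  sval V l N₁ '' Tup (2 ^ l) N₁ (2 ^ l * ρ)

lemma dexp_nonneg (t : ℝ) (E : EReal) : 0 ≤ dexp t E := by
  unfold PreChannel.dexp
  split
  · exact le_refl 0
  · exact (Real.exp_pos _).le

lemma sval_nonneg (V : PreChannel) (l N₁ : ℕ) (Rv : Fin (2 ^ l) → ℝ) :
    0 ≤ sval V l N₁ Rv :=
  Finset.sum_nonneg fun _ _ => dexp_nonneg _ _

lemma nlog_anti {a b : ℝ} (h : a ≤ b) : nlog b ≤ nlog a := by
  unfold PreChannel.nlog
  by_cases ha : a ≤ 0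
  · simp only [ha, if_true]
    exact le_top
  · have hb : ¬b ≤ 0 := fun hb => ha (h.trans hb)
    simp only [ha, hb, if_false]
    have := Real.log_le_log (lt_of_not_ge ha) h
    exact_mod_cast neg_le_neg this

lemma Tup_finite (n N₁ : ℕ) (hN₁ : 1 ≤ N₁) (σ : ℝ) : (Tup n N₁ σ).Finite := by
  have hfin : (Set.univ : Set (Fin n)).pi
      (fun _ => (fun k : ℤ => (k : ℝ) / N₁) '' (Set.Icc (0 : ℤ) N₁)) |>.Finite :=
    Set.Finite.pi fun _ => (Set.finite_Icc _ _).image _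
  refine hfin.subset ?_
  rintro Rv ⟨h1, -⟩ i -
  obtain ⟨⟨h0, hle⟩, k, hk⟩ := h1 i
  have hN : (0 : ℝ) < N₁ := by exact_mod_cast hN₁
  refine ⟨k, ?_, ?_⟩
  · constructor
    · exact_mod_cast hk ▸ (by positivity : (0:ℝ) ≤ Rv i * N₁)
    · have : Rv i * N₁ ≤ N₁ := by nlinarith
      exact_mod_cast hk ▸ this
  · show (k : ℝ) / N₁ = Rv i
    rw [← hk]
    field_simp

lemma clamp_sum (n : ℕ) (x : ℝ) (h0 : 0 ≤ x) (h1 : x ≤ n) :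
    ∑ i ∈ Finset.range n, min 1 (max 0 (x - i)) = x := by
  induction n generalizing x with
  | zero =>
    simp only [Finset.range_zero, Finset.sum_empty, Nat.cast_zero] at h1 ⊢
    linarith
  | succ n ih =>
    rw [Finset.sum_range_succ']
    by_cases hx : 1 ≤ x
    · have hsum : ∑ i ∈ Finset.range n, min 1 (max 0 (x - ((i : ℕ) + 1 : ℕ))) = x - 1 := by
        have := ih (x - 1) (by linarith) (by push_cast at h1 ⊢; linarith)
        rw [← this]
        refine Finset.sum_congr rfl fun i _ => ?_
        push_cast
        ring_nf
      have hx0 : min 1 (max 0 (x - (0 : ℕ))) = 1 := by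
        rw [Nat.cast_zero, sub_zero]
        rw [max_eq_right h0, min_eq_left hx]
      rw [hsum, hx0]
      ring
    · push_neg at hx
      have hsum : ∑ i ∈ Finset.range n, min 1 (max 0 (x - ((i : ℕ) + 1 : ℕ))) = 0 := by
        refine Finset.sum_eq_zero fun i _ => ?_
        have : x - ((i : ℕ) + 1 : ℕ) ≤ 0 := by push_cast; linarith [Nat.cast_nonneg (α := ℝ) i]
        rw [max_eq_left this, min_eq_right zero_le_one]
      rw [hsum, Nat.cast_zero, sub_zero, max_eq_right h0, min_eq_right hx.le]
      ring

lemma Tup_nonempty (n N₁ : ℕ) (hN₁ : 1 ≤ N₁) (σ : ℝ) (h0 : 0 ≤ σ) (h1 : σ ≤ n)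
    (K : ℤ) (hK : σ * N₁ = K) : (Tup n N₁ σ).Nonempty := by
  have hNpos : (0 : ℝ) ≤ (N₁ : ℝ) := Nat.cast_nonneg _
  refine ⟨fun i => min 1 (max 0 (σ - (i : ℕ))), ⟨fun i => ⟨⟨?_, min_le_left _ _⟩, ?_⟩, ?_⟩⟩
  · exact le_min zero_le_one (le_max_left _ _)
  · refine ⟨min (N₁ : ℤ) (max 0 (K - (i : ℕ) * N₁)), ?_⟩
    rw [min_mul_of_nonneg _ _ hNpos, max_mul_of_nonneg _ _ hNpos, one_mul, zero_mul]
    have : (σ - (i : ℕ)) * N₁ = (K : ℝ) - (i : ℕ) * N₁ := by rw [← hK]; ring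
    rw [this]
    push_cast
    ring_nf
  · rw [Fin.sum_univ_eq_sum_range (fun j => min 1 (max 0 (σ - (j : ℕ))))]
    exact clamp_sum n σ h0 h1

end Stmt0Aux
namespace Stmt0Aux
open PreChannel Finset

lemma Aset_finite (V : PreChannel) (l N₁ : ℕ) (hN₁ : 1 ≤ N₁) (ρ : ℝ) :
    (Aset V l N₁ ρ).Finite :=
  (Tup_finite _ _ hN₁ _).image _

lemma Aset_nonempty (V : PreChannel) (l N₁ : ℕ) (hN₁ : 1 ≤ N₁) (ρ : ℝ)
    (hρ : ρ ∈ Set.Icc (0 : ℝ) 1) (hk : ∃ k : ℤ, ρ * N₁ * 2 ^ l = k) :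
    (Aset V l N₁ ρ).Nonempty := by
  obtain ⟨K, hK⟩ := hk
  refine Set.Nonempty.image _ (Tup_nonempty _ _ hN₁ _ ?_ ?_ K ?_)
  · have := hρ.1; positivity
  · push_cast
    nlinarith [hρ.2, pow_pos (by norm_num : (0:ℝ) < 2) l]
  · rw [← hK]; ring

lemma Aset_nonneg (V : PreChannel) (l N₁ : ℕ) (ρ : ℝ) {a : ℝ} (ha : a ∈ Aset V l N₁ ρ) :
    0 ≤ a := by
  obtain ⟨Rv, -, rfl⟩ := ha
  exact sval_nonneg _ _ _ _

lemma sSup_nlog_image {A : Set ℝ} (hfin : A.Finite) (hne : A.Nonempty) :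
    sSup (nlog '' A) = nlog (sInf A) := by
  apply le_antisymm
  · apply sSup_le
    rintro v ⟨a, ha, rfl⟩
    exact nlog_anti (csInf_le hfin.bddBelow ha)
  · exact le_sSup ⟨sInf A, hne.csInf_mem hfin, rfl⟩

lemma dexp_nlog {T m : ℝ} (hT : 0 < T) (hm : 0 ≤ m) :
    dexp T (((1 / T : ℝ) : EReal) * nlog m) = m := by
  rcases eq_or_lt_of_le hm with h0 | h0
  · have hnl : nlog m = ⊤ := by unfold PreChannel.nlog; rw [if_pos (le_of_eq h0.symm)]
    rw [hnl, EReal.mul_top_of_pos (by exact_mod_cast (by positivity : (0:ℝ) < 1/T))]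
    unfold PreChannel.dexp
    rw [if_pos rfl, ← h0]
  · have hnl : nlog m = ((-Real.log m : ℝ) : EReal) := by
      unfold PreChannel.nlog; rw [if_neg (not_le.mpr h0)]
    rw [hnl, ← EReal.coe_mul]
    unfold PreChannel.dexp
    rw [if_neg (EReal.coe_ne_top _), EReal.toReal_coe]
    have : -T * (1 / T * -Real.log m) = Real.log m := by field_simp
    rw [this, Real.exp_log h0]

lemma ElamN_eq (V : PreChannel) (l N₁ : ℕ) (ρ : ℝ) :
    ElamN V l N₁ ρ = ((1 / ((N₁ : ℝ) * 2 ^ l) : ℝ) : EReal) *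
      sSup (nlog '' Aset V l N₁ ρ) := by
  unfold ElamN
  congr 1
  apply congrArg
  ext v
  constructor
  · rintro ⟨Rv, h1, h2, rfl⟩
    exact ⟨sval V l N₁ Rv, ⟨Rv, ⟨h1, h2⟩, rfl⟩, rfl⟩
  · rintro ⟨a, ⟨Rv, ⟨h1, h2⟩, rfl⟩, rfl⟩
    exact ⟨Rv, h1, h2, rfl⟩

lemma dexp_ElamN (V : PreChannel) (l N₁ : ℕ) (hN₁ : 1 ≤ N₁) (ρ : ℝ)
    (hρ : ρ ∈ Set.Icc (0 : ℝ) 1) (hk : ∃ k : ℤ, ρ * N₁ * 2 ^ l = k) :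
    dexp ((N₁ : ℝ) * 2 ^ l) (ElamN V l N₁ ρ) = sInf (Aset V l N₁ ρ) := by
  have hne := Aset_nonempty V l N₁ hN₁ ρ hρ hk
  have hfin := Aset_finite V l N₁ hN₁ ρ
  have hT : (0 : ℝ) < (N₁ : ℝ) * 2 ^ l := by
    have : (0 : ℝ) < N₁ := by exact_mod_cast hN₁
    positivity
  rw [ElamN_eq, sSup_nlog_image hfin hne, dexp_nlog hT (Aset_nonneg V l N₁ ρ (hne.csInf_mem hfin))]

def finlo (l : ℕ) (i : Fin (2 ^ l)) : Fin (2 ^ (l + 1)) :=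
  ⟨(i : ℕ), lt_of_lt_of_le i.isLt (Nat.pow_le_pow_right (by norm_num) (Nat.le_succ l))⟩

def finhi (l : ℕ) (i : Fin (2 ^ l)) : Fin (2 ^ (l + 1)) :=
  ⟨2 ^ l + (i : ℕ), by have := i.isLt; rw [pow_succ]; omega⟩

lemma fin_sum_split (l : ℕ) (f : Fin (2 ^ (l + 1)) → ℝ) :
    ∑ i, f i = ∑ i : Fin (2 ^ l), f (finlo l i) + ∑ i : Fin (2 ^ l), f (finhi l i) := by
  have hlt : ∀ j : ℕ, j < 2 ^ (l + 1) → True := fun _ _ => trivial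
  set f' : ℕ → ℝ := fun j => if h : j < 2 ^ (l + 1) then f ⟨j, h⟩ else 0 with hf'
  have h1 : ∑ i, f i = ∑ j ∈ Finset.range (2 ^ (l + 1)), f' j := by
    rw [← Fin.sum_univ_eq_sum_range]
    refine Finset.sum_congr rfl fun i _ => ?_
    simp [hf', i.isLt]
  have h2 : 2 ^ (l + 1) = 2 ^ l + 2 ^ l := by rw [pow_succ]; omega
  rw [h1, h2, Finset.sum_range_add]
  congr 1
  · rw [← Fin.sum_univ_eq_sum_range f']
    refine Finset.sum_congr rfl fun i _ => ?_
    have hi : (i : ℕ) < 2 ^ (l + 1) := (finlo l i).isLt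
    simp only [hf', dif_pos hi]
    rfl
  · rw [← Fin.sum_univ_eq_sum_range (fun j => f' (2 ^ l + j))]
    refine Finset.sum_congr rfl fun i _ => ?_
    have hi : 2 ^ l + (i : ℕ) < 2 ^ (l + 1) := (finhi l i).isLt
    simp only [hf', dif_pos hi]
    rfl

lemma subch_lo (W : PreChannel) (l : ℕ) (i : ℕ) (h : i < 2 ^ l) :
    subch W (l + 1) i = subch W.minus l i := by
  show subch (if i / 2 ^ l % 2 = 1 then W.plus else W.minus) l (i % 2 ^ l) = _
  rw [Nat.div_eq_of_lt h, Nat.mod_eq_of_lt h]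
  norm_num

lemma subch_hi (W : PreChannel) (l : ℕ) (i : ℕ) (h : i < 2 ^ l) :
    subch W (l + 1) (2 ^ l + i) = subch W.plus l i := by
  show subch (if (2 ^ l + i) / 2 ^ l % 2 = 1 then W.plus else W.minus) l ((2 ^ l + i) % 2 ^ l) = _
  have hp : 0 < 2 ^ l := Nat.pow_pos (by norm_num)
  rw [Nat.add_comm (2 ^ l) i, Nat.add_div_right _ hp, Nat.add_mod_right,
    Nat.div_eq_of_lt h, Nat.mod_eq_of_lt h]
  norm_num

lemma sval_split (W : PreChannel) (l N₁ : ℕ) (Rv : Fin (2 ^ (l + 1)) → ℝ) :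
    sval W (l + 1) N₁ Rv =
      sval W.minus l N₁ (fun i => Rv (finlo l i)) +
      sval W.plus l N₁ (fun i => Rv (finhi l i)) := by
  unfold sval
  rw [fin_sum_split l (fun i => dexp (N₁ : ℝ) (EchanN (subch W (l + 1) (i : ℕ)) (Rv i) N₁))]
  congr 1
  · exact Finset.sum_congr rfl fun i _ => by rw [show ((finlo l i : Fin (2^(l+1))) : ℕ) = (i:ℕ) from rfl, subch_lo W l i i.isLt]
  · exact Finset.sum_congr rfl fun i _ => by rw [show ((finhi l i : Fin (2^(l+1))) : ℕ) = 2^l + (i:ℕ) from rfl, subch_hi W l i i.isLt]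

end Stmt0Aux
open Stmt0Aux in
/-- recursion for the finite-blocklength exponent. -/
theorem stmt0 (W : PreChannel) (hW : W.IsBMS) (lam N₁ : ℕ) (hlam : 1 ≤ lam)
    (hN₁ : 1 ≤ N₁) (R : ℝ) (hR : R ∈ Set.Icc (0 : ℝ) 1)
    (hInt : ∃ k : ℤ, R * (N₁ : ℝ) * 2 ^ lam = (k : ℝ)) :
    ElamN W lam N₁ R =
      ((1 / ((N₁ : ℝ) * 2 ^ lam) : ℝ) : EReal) *
        sSup {v : EReal | ∃ R₁ ∈ Set.Icc (max 0 (2 * R - 1)) (min 1 (2 * R)),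
          (∃ k : ℤ, R₁ * (N₁ : ℝ) * 2 ^ (lam - 1) = (k : ℝ)) ∧
          v = nlog (dexp ((N₁ : ℝ) * 2 ^ (lam - 1)) (ElamN W.minus (lam - 1) N₁ R₁) +
              dexp ((N₁ : ℝ) * 2 ^ (lam - 1)) (ElamN W.plus (lam - 1) N₁ (2 * R - R₁)))} := by
  obtain ⟨l, rfl⟩ : ∃ l, lam = l + 1 := ⟨lam - 1, (Nat.succ_pred_eq_of_pos hlam).symm⟩
  obtain ⟨K₀, hK₀⟩ := hInt
  simp only [Nat.add_sub_cancel]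
  rw [ElamN_eq]
  congr 1
  have h2l : (0 : ℝ) < 2 ^ l := by positivity
  have hpow : (2 : ℝ) ^ (l + 1) = 2 * 2 ^ l := by rw [pow_succ]; ring
  apply le_antisymm
  · -- every LHS value is dominated
    apply sSup_le
    rintro v ⟨a, ⟨Rv, ⟨hmem, hsum⟩, rfl⟩, rfl⟩
    set σm : ℝ := ∑ i : Fin (2 ^ l), Rv (finlo l i) with hσm
    set σp : ℝ := ∑ i : Fin (2 ^ l), Rv (finhi l i) with hσp
    have hsplitσ : σm + σp = 2 ^ (l + 1) * R := by
      rw [hσm, hσp, ← fin_sum_split]; exact hsum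
    have hσm0 : 0 ≤ σm := Finset.sum_nonneg fun i _ => (hmem _).1.1
    have hσm1 : σm ≤ 2 ^ l := by
      calc σm ≤ ∑ _i : Fin (2 ^ l), (1 : ℝ) := Finset.sum_le_sum fun i _ => (hmem _).1.2
        _ = 2 ^ l := by simp
    have hσp0 : 0 ≤ σp := Finset.sum_nonneg fun i _ => (hmem _).1.1
    have hσp1 : σp ≤ 2 ^ l := by
      calc σp ≤ ∑ _i : Fin (2 ^ l), (1 : ℝ) := Finset.sum_le_sum fun i _ => (hmem _).1.2
        _ = 2 ^ l := by simp
    set R₁ : ℝ := σm / 2 ^ l with hR₁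
    have hR₁σ : 2 ^ l * R₁ = σm := by rw [hR₁]; field_simp
    have hR₂σ : 2 ^ l * (2 * R - R₁) = σp := by
      have : 2 ^ l * R₁ = σm := hR₁σ
      nlinarith [hsplitσ]
    have hb1 : max 0 (2 * R - 1) ≤ R₁ := by
      apply max_le
      · positivity
      · rw [hR₁, le_div_iff₀ h2l]; nlinarith
    have hb2 : R₁ ≤ min 1 (2 * R) := by
      apply le_min
      · rw [hR₁, div_le_one h2l]; linarith
      · rw [hR₁, div_le_iff₀ h2l]; nlinarith
    have hR₁01 : R₁ ∈ Set.Icc (0 : ℝ) 1 :=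
      ⟨le_trans (le_max_left _ _) hb1, le_trans hb2 (min_le_left _ _)⟩
    have hR₂01 : 2 * R - R₁ ∈ Set.Icc (0 : ℝ) 1 := by
      constructor
      · have := le_trans hb2 (min_le_right _ _); linarith
      · have := le_trans (le_max_right _ _) hb1; linarith
    have hkex : ∃ k : ℤ, R₁ * (N₁ : ℝ) * 2 ^ l = (k : ℝ) := by
      choose kf hkf using fun i : Fin (2 ^ (l + 1)) => (hmem i).2
      refine ⟨∑ i : Fin (2 ^ l), kf (finlo l i), ?_⟩
      have h : R₁ * (N₁ : ℝ) * 2 ^ l = σm * N₁ := by rw [← hR₁σ]; ring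
      rw [h, hσm, Finset.sum_mul]
      push_cast
      exact Finset.sum_congr rfl fun i _ => hkf _
    have hkex2 : ∃ k : ℤ, (2 * R - R₁) * (N₁ : ℝ) * 2 ^ l = (k : ℝ) := by
      obtain ⟨K₁, hK₁⟩ := hkex
      refine ⟨K₀ - K₁, ?_⟩
      have h : (2 * R - R₁) * (N₁ : ℝ) * 2 ^ l =
          R * N₁ * 2 ^ (l + 1) - R₁ * N₁ * 2 ^ l := by ring
      rw [h, hK₀, hK₁]; push_cast; ring
    have hTm : (fun i => Rv (finlo l i)) ∈ Tup (2 ^ l) N₁ (2 ^ l * R₁) :=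
      ⟨fun i => hmem _, by rw [hR₁σ]⟩
    have hTp : (fun i => Rv (finhi l i)) ∈ Tup (2 ^ l) N₁ (2 ^ l * (2 * R - R₁)) :=
      ⟨fun i => hmem _, by rw [hR₂σ]⟩
    have hm_le : sInf (Aset W.minus l N₁ R₁) ≤ sval W.minus l N₁ (fun i => Rv (finlo l i)) :=
      csInf_le (Aset_finite _ _ _ hN₁ _).bddBelow ⟨_, hTm, rfl⟩
    have hp_le : sInf (Aset W.plus l N₁ (2 * R - R₁)) ≤
        sval W.plus l N₁ (fun i => Rv (finhi l i)) :=
      csInf_le (Aset_finite _ _ _ hN₁ _).bddBelow ⟨_, hTp, rfl⟩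
    have hdm := dexp_ElamN W.minus l N₁ hN₁ R₁ hR₁01 hkex
    have hdp := dexp_ElamN W.plus l N₁ hN₁ (2 * R - R₁) hR₂01 hkex2
    have key : dexp ((N₁ : ℝ) * 2 ^ l) (ElamN W.minus l N₁ R₁) +
        dexp ((N₁ : ℝ) * 2 ^ l) (ElamN W.plus l N₁ (2 * R - R₁)) ≤
        sval W (l + 1) N₁ Rv := by
      rw [hdm, hdp, sval_split]
      exact add_le_add hm_le hp_le
    refine le_trans (nlog_anti key) (le_sSup ?_)
    exact ⟨R₁, ⟨hb1, hb2⟩, hkex, rfl⟩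
  · -- every RHS value is dominated
    apply sSup_le
    rintro v ⟨R₁, ⟨hb1, hb2⟩, hkR₁, rfl⟩
    have hR₁01 : R₁ ∈ Set.Icc (0 : ℝ) 1 :=
      ⟨le_trans (le_max_left _ _) hb1, le_trans hb2 (min_le_left _ _)⟩
    have hR₂01 : 2 * R - R₁ ∈ Set.Icc (0 : ℝ) 1 := by
      constructor
      · have := le_trans hb2 (min_le_right _ _); linarith
      · have := le_trans (le_max_right _ _) hb1; linarith
    have hkR₂ : ∃ k : ℤ, (2 * R - R₁) * (N₁ : ℝ) * 2 ^ l = (k : ℝ) := by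
      obtain ⟨K₁, hK₁⟩ := hkR₁
      refine ⟨K₀ - K₁, ?_⟩
      have h : (2 * R - R₁) * (N₁ : ℝ) * 2 ^ l =
          R * N₁ * 2 ^ (l + 1) - R₁ * N₁ * 2 ^ l := by ring
      rw [h, hK₀, hK₁]; push_cast; ring
    rw [dexp_ElamN W.minus l N₁ hN₁ R₁ hR₁01 hkR₁,
      dexp_ElamN W.plus l N₁ hN₁ (2 * R - R₁) hR₂01 hkR₂]
    obtain ⟨Rm, hTm, hRmval⟩ :=
      (Aset_nonempty W.minus l N₁ hN₁ R₁ hR₁01 hkR₁).csInf_mem (Aset_finite W.minus l N₁ hN₁ R₁)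
    obtain ⟨Rp, hTp, hRpval⟩ :=
      (Aset_nonempty W.plus l N₁ hN₁ (2 * R - R₁) hR₂01 hkR₂).csInf_mem
        (Aset_finite W.plus l N₁ hN₁ (2 * R - R₁))
    set Rv : Fin (2 ^ (l + 1)) → ℝ := fun j =>
      if h : (j : ℕ) < 2 ^ l then Rm ⟨(j : ℕ), h⟩
      else Rp ⟨(j : ℕ) - 2 ^ l, by have h2 : 2 ^ (l + 1) = 2 ^ l * 2 := pow_succ 2 l; have := j.isLt; omega⟩ with hRv
    have hlo : ∀ i : Fin (2 ^ l), Rv (finlo l i) = Rm i := by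
      intro i
      have : ((finlo l i : Fin (2 ^ (l + 1))) : ℕ) = (i : ℕ) := rfl
      simp only [hRv, this, dif_pos i.isLt, Fin.eta]
    have hhi : ∀ i : Fin (2 ^ l), Rv (finhi l i) = Rp i := by
      intro i
      have h1 : ((finhi l i : Fin (2 ^ (l + 1))) : ℕ) = 2 ^ l + (i : ℕ) := rfl
      have h2 : ¬(2 ^ l + (i : ℕ) < 2 ^ l) := by omega
      simp only [hRv, h1, dif_neg h2]
      congr 1
      exact Fin.ext (by simp)
    have hTv : Rv ∈ Tup (2 ^ (l + 1)) N₁ (2 ^ (l + 1) * R) := by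
      constructor
      · intro j
        simp only [hRv]
        split
        · exact hTm.1 _
        · exact hTp.1 _
      · rw [fin_sum_split l Rv]
        rw [Finset.sum_congr rfl fun i _ => hlo i, Finset.sum_congr rfl fun i _ => hhi i]
        rw [hTm.2, hTp.2]
        ring
    have hsv : sval W (l + 1) N₁ Rv =
        sInf (Aset W.minus l N₁ R₁) + sInf (Aset W.plus l N₁ (2 * R - R₁)) := by
      rw [sval_split]
      congr 1
      · rw [show (fun i => Rv (finlo l i)) = Rm from funext hlo]; exact hRmval
      · rw [show (fun i => Rv (finhi l i)) = Rp from funext hhi]; exact hRpval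
    exact le_sSup ⟨_, ⟨Rv, hTv, hsv⟩, rfl⟩
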